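/- Let 𝒳 be a fundamental minimal system for 𝕏 that is bounded-oscillation unconditional with function Φ. Then for every f in the linear span ⟨𝒳⟩, every 0 < t ≤ 1, and every A ⊆ supp(f) with osc(f,A) ≤ 1/t, one has ‖P_A(f)‖ ≤ Φ(t) · sup{|f*(f)| : f* ∈ ⟨𝒳*⟩, ‖f*‖ ≤ 1}. -/

import Mathlib

/-- If `𝒳` is bounded-oscillation unconditional with function `Φ`, then for every
`f` in the span of `𝒳`, every `0 < t ≤ 1` and every `A ⊆ supp(f)` with `osc(f,A) ≤ 1/t`
(equivalently `t‖x_n*(f)‖ ≤ ‖x_k*(f)‖` for all `n ∈ A` and `k ∈ A` with `x_k*(f) ≠ 0`),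
one has `‖P_A(f)‖ ≤ Φ(t) · sup{|f*(f)| : f* ∈ ⟨𝒳*⟩, ‖f*‖ ≤ 1}`. -/
theorem bou_projection_bounded_by_bidual_norm
    {𝕜 : Type*} [RCLike 𝕜] {X : Type*} [NormedAddCommGroup X] [NormedSpace 𝕜 X]
    [CompleteSpace X] [TopologicalSpace.SeparableSpace X]
    (hinf : ¬ FiniteDimensional 𝕜 X)
    (x : ℕ → X) (xs : ℕ → X →L[𝕜] 𝕜)
    (hdense : Dense (Submodule.span 𝕜 (Set.range x) : Set X))
    (hbi : ∀ n k, xs n (x k) = if n = k then 1 else 0)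
    (Φ : ℝ → ℝ)
    (hBOU : ∀ (f : X) (t : ℝ), 0 < t → t ≤ 1 → ∀ A : Finset ℕ,
      (∀ n ∈ A, ∀ k ∈ A, xs k f ≠ 0 → t * ‖xs n f‖ ≤ ‖xs k f‖) →
      ‖∑ n ∈ A, xs n f • x n‖ ≤ Φ t * ‖f‖) :
    ∀ f ∈ Submodule.span 𝕜 (Set.range x), ∀ t : ℝ, 0 < t → t ≤ 1 → ∀ A : Finset ℕ,
      (∀ n ∈ A, xs n f ≠ 0) →
      (∀ n ∈ A, ∀ k ∈ A, xs k f ≠ 0 → t * ‖xs n f‖ ≤ ‖xs k f‖) →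
      ‖∑ n ∈ A, xs n f • x n‖ ≤ Φ t *
        sSup {r : ℝ | ∃ g ∈ Submodule.span 𝕜 (Set.range xs), ‖g‖ ≤ 1 ∧ r = ‖g f‖} := by
  intro f hf t ht ht1 A hsupp hosc
  -- Φ t is nonnegative
  have hx0 : x 0 ≠ 0 := by
    intro h
    have := hbi 0 0
    rw [h, map_zero] at this
    simp at this
  have hΦ : 0 ≤ Φ t := by
    have h0 := hBOU (x 0) t ht ht1 ∅ (by simp)
    simp only [Finset.sum_empty, norm_zero] at h0
    have hx0' : 0 < ‖x 0‖ := norm_pos_iff.mpr hx0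
    nlinarith
  -- the subspace Y = ⋂_{n ∈ A} ker (xs n)
  set Y : Submodule 𝕜 X := ⨅ n ∈ A, LinearMap.ker (xs n : X →ₗ[𝕜] 𝕜) with hY
  have hmemY : ∀ z : X, z ∈ Y ↔ ∀ n ∈ A, xs n z = 0 := by
    intro z
    simp [hY, Submodule.mem_iInf, LinearMap.mem_ker]
  haveI hYclosed : IsClosed (Y : Set X) := by
    have : (Y : Set X) = ⋂ n ∈ A, (LinearMap.ker (xs n : X →ₗ[𝕜] 𝕜) : Set X) := by
      ext z
      simp [hmemY z, Set.mem_iInter, LinearMap.mem_ker]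
    rw [this]
    exact isClosed_biInter fun n _ => ContinuousLinearMap.isClosed_ker (xs n)
  -- the quotient map as a continuous linear map
  let π : X →L[𝕜] X ⧸ Y :=
    LinearMap.mkContinuous Y.mkQ 1 (fun z => by
      simpa using Submodule.Quotient.norm_mk_le Y z)
  have hπ : ∀ z : X, π z = Submodule.Quotient.mk z := fun z => rfl
  set d : ℝ := ‖(Submodule.Quotient.mk f : X ⧸ Y)‖ with hd
  have hd0 : 0 ≤ d := norm_nonneg _
  -- norming functional on the quotient
  obtain ⟨g0, hg0norm, hg0⟩ := exists_dual_vector'' 𝕜 (Submodule.Quotient.mk f : X ⧸ Y)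
  set g : X →L[𝕜] 𝕜 := g0.comp π with hg
  have hπn : ‖π‖ ≤ 1 := LinearMap.mkContinuous_norm_le Y.mkQ zero_le_one _
  have hgnorm : ‖g‖ ≤ 1 := by
    calc ‖g‖ ≤ ‖g0‖ * ‖π‖ := ContinuousLinearMap.opNorm_comp_le _ _
    _ ≤ 1 * 1 := mul_le_mul hg0norm hπn (ContinuousLinearMap.opNorm_nonneg _) zero_le_one
    _ = 1 := one_mul 1
  have hgf : g f = (d : 𝕜) := by
    rw [hg, ContinuousLinearMap.comp_apply, hπ, hg0]
  -- g vanishes on Y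
  have hgY : ∀ z ∈ Y, g z = 0 := by
    intro z hz
    rw [hg, ContinuousLinearMap.comp_apply, hπ]
    rw [(Submodule.Quotient.mk_eq_zero Y).mpr hz, map_zero]
  -- g is in the span of the xs
  have hrep : g = ∑ n ∈ A, g (x n) • xs n := by
    ext z
    have hzY : z - ∑ n ∈ A, xs n z • x n ∈ Y := by
      rw [hmemY]
      intro n hn
      rw [map_sub, map_sum]
      have : ∀ k ∈ A, xs n (xs k z • x k) = if n = k then xs n z else 0 := by
        intro k _
        rw [map_smul, hbi n k]
        by_cases h : n = k <;> simp [h]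
      rw [Finset.sum_congr rfl this]
      simp [hn]
    have h0 := hgY _ hzY
    rw [map_sub, sub_eq_zero, map_sum] at h0
    rw [ContinuousLinearMap.sum_apply]
    rw [h0]
    apply Finset.sum_congr rfl
    intro n _
    rw [map_smul, ContinuousLinearMap.smul_apply, smul_eq_mul, smul_eq_mul, mul_comm]
  have hgspan : g ∈ Submodule.span 𝕜 (Set.range xs) := by
    rw [hrep]
    exact Submodule.sum_mem _ fun n _ =>
      Submodule.smul_mem _ _ (Submodule.subset_span ⟨n, rfl⟩)
  -- d is at most the sup
  set S : Set ℝ := {r : ℝ | ∃ g ∈ Submodule.span 𝕜 (Set.range xs), ‖g‖ ≤ 1 ∧ r = ‖g f‖}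
    with hS
  have hbdd : BddAbove S := by
    refine ⟨‖f‖, ?_⟩
    rintro r ⟨g', hg', hgn', rfl⟩
    calc ‖g' f‖ ≤ ‖g'‖ * ‖f‖ := g'.le_opNorm f
    _ ≤ 1 * ‖f‖ := mul_le_mul_of_nonneg_right hgn' (norm_nonneg f)
    _ = ‖f‖ := one_mul _
  have hdS : d ≤ sSup S := by
    apply le_csSup hbdd
    refine ⟨g, hgspan, hgnorm, ?_⟩
    rw [hgf]
    rw [RCLike.norm_ofReal, abs_of_nonneg hd0]
  -- main estimate: ‖P_A f‖ ≤ Φ t * d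
  have key : ∀ ε : ℝ, 0 < ε → ‖∑ n ∈ A, xs n f • x n‖ ≤ Φ t * (d + ε) := by
    intro ε hε
    obtain ⟨m, hm, hmn⟩ :=
      Submodule.Quotient.norm_mk_lt (Submodule.Quotient.mk f : X ⧸ Y) hε
    have hmf : ∀ n ∈ A, xs n m = xs n f := by
      intro n hn
      have : m - f ∈ Y := by
        rw [← Submodule.Quotient.mk_eq_zero, Submodule.Quotient.mk_sub, hm, sub_self]
      have := (hmemY _).mp this n hn
      rw [map_sub, sub_eq_zero] at this
      exact this
    have hosc' : ∀ n ∈ A, ∀ k ∈ A, xs k m ≠ 0 → t * ‖xs n m‖ ≤ ‖xs k m‖ := by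
      intro n hn k hk hk0
      rw [hmf n hn, hmf k hk]
      exact hosc n hn k hk (by rwa [hmf k hk] at hk0)
    have hb := hBOU m t ht ht1 A hosc'
    have hsum : ∑ n ∈ A, xs n m • x n = ∑ n ∈ A, xs n f • x n :=
      Finset.sum_congr rfl fun n hn => by rw [hmf n hn]
    rw [hsum] at hb
    calc ‖∑ n ∈ A, xs n f • x n‖ ≤ Φ t * ‖m‖ := hb
    _ ≤ Φ t * (d + ε) := mul_le_mul_of_nonneg_left hmn.le hΦ
  have hkey : ‖∑ n ∈ A, xs n f • x n‖ ≤ Φ t * d := by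
    apply le_of_forall_pos_le_add
    intro ε hε
    rcases eq_or_lt_of_le hΦ with hΦ0 | hΦ0
    · nlinarith [key 1 one_pos]
    · have := key (ε / Φ t) (div_pos hε hΦ0)
      calc ‖∑ n ∈ A, xs n f • x n‖ ≤ Φ t * (d + ε / Φ t) := this
      _ = Φ t * d + ε := by rw [mul_add, mul_div_cancel₀ _ (ne_of_gt hΦ0)]
  calc ‖∑ n ∈ A, xs n f • x n‖ ≤ Φ t * d := hkey
  _ ≤ Φ t * sSup S := mul_le_mul_of_nonneg_left hdS hΦ
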